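/- Let h > 0, ν > 0, α > 0 be real, let k be a nonzero integer, and let s ∈ ℂ with Re(s) > 0. Set d = h²(s + νk²)/ν. Then (ν − αh²/4)·d² − h²·(s + 2νk² + α)·d + h⁴k²·(s + νk² + α) ≠ 0. -/

import Mathlib

open Complex

/-- The root `d₂^(1) = h²(s+νk²)/ν` of the linear factor is not a root of the
quadratic factor when Re(s) > 0. -/
theorem stmt_11 (h ν α : ℝ) (hh : 0 < h) (hν : 0 < ν) (hα : 0 < α)
    (k : ℤ) (hk : k ≠ 0) (s : ℂ) (hs : 0 < s.re)
    (d : ℂ) (hd : d = (h : ℂ) ^ 2 * (s + (ν : ℂ) * (k : ℂ) ^ 2) / (ν : ℂ)) :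
    ((ν : ℂ) - (α : ℂ) * (h : ℂ) ^ 2 / 4) * d ^ 2
      - (h : ℂ) ^ 2 * (s + 2 * (ν : ℂ) * (k : ℂ) ^ 2 + (α : ℂ)) * d
      + (h : ℂ) ^ 4 * (k : ℂ) ^ 2 * (s + (ν : ℂ) * (k : ℂ) ^ 2 + (α : ℂ)) ≠ 0 := by
  have hν0 : (ν : ℂ) ≠ 0 := by exact_mod_cast hν.ne'
  have hα0 : (α : ℂ) ≠ 0 := by exact_mod_cast hα.ne'
  have hh0 : (h : ℂ) ≠ 0 := by exact_mod_cast hh.ne'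
  set w : ℂ := s + (ν : ℂ) * (k : ℂ) ^ 2 with hw
  have factored :
      ((ν : ℂ) - (α : ℂ) * (h : ℂ) ^ 2 / 4) * d ^ 2
        - (h : ℂ) ^ 2 * (s + 2 * (ν : ℂ) * (k : ℂ) ^ 2 + (α : ℂ)) * d
        + (h : ℂ) ^ 4 * (k : ℂ) ^ 2 * (s + (ν : ℂ) * (k : ℂ) ^ 2 + (α : ℂ))
      = -(α : ℂ) * (h : ℂ) ^ 4 * ((h : ℂ) ^ 2 * w ^ 2 + 4 * (ν : ℂ) * s)
        / (4 * (ν : ℂ) ^ 2) := by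
    rw [hd, hw]
    field_simp
    ring
  rw [factored]
  intro hE
  have key : (h : ℂ) ^ 2 * w ^ 2 + 4 * (ν : ℂ) * s = 0 := by
    field_simp [hν0, hα0, hh0] at hE
    rw [mul_zero, neg_eq_zero] at hE
    exact (mul_eq_zero.mp hE).resolve_left
      (mul_ne_zero hα0 (pow_ne_zero _ hh0))
  have hcast : (ν : ℂ) * (k : ℂ) ^ 2 = ((ν * (k : ℝ) ^ 2 : ℝ) : ℂ) := by
    push_cast; ring
  have hwre : w.re = s.re + ν * (k : ℝ) ^ 2 := by rw [hw, hcast]; simp only [Complex.add_re, Complex.add_im, Complex.ofReal_re, Complex.ofReal_im, add_zero]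
  have hwim : w.im = s.im := by rw [hw, hcast]; simp only [Complex.add_re, Complex.add_im, Complex.ofReal_re, Complex.ofReal_im, add_zero]
  have hkpos : 0 < ν * (k : ℝ) ^ 2 := by
    have : (0:ℝ) < (k : ℝ) ^ 2 := by positivity
    positivity
  have hwrepos : 0 < w.re := by rw [hwre]; linarith
  have kim := congrArg Complex.im key
  have kre := congrArg Complex.re key
  simp [Complex.mul_im, Complex.mul_re, Complex.add_im, Complex.add_re, pow_two] at kim kre
  rw [hwim] at kim kre
  have hfac : s.im * (2 * (h * h) * w.re + 4 * ν) = 0 := by linear_combination kim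
  have him : s.im = 0 := by
    rcases mul_eq_zero.mp hfac with h1 | h1
    · exact h1
    · exfalso
      nlinarith [mul_nonneg (mul_self_nonneg h) hwrepos.le]
  rw [him] at kre
  nlinarith [mul_nonneg (mul_self_nonneg h) (mul_pos hwrepos hwrepos).le, kre]
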